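/- arXiv:1401.1086 — 2 statements merged into one kernel-verified Lean document; each statement's English description precedes it below -/
import Mathlib

section
/- In the example network (the path a — b — c with V_src = {a,c}, V_ld = {b}, α = 1), with defense V_d = {b} one has p(∅,{b}) = 0, p({a},{b}) = 0, p({c},{b}) = 0 and p({a,c},{b}) = 1. Hence p({a,c},{b}) − p({a},{b}) > p({c},{b}) − p(∅,{b}), so the map V_a ↦ p(V_a,{b}) is not submodular. -/
open scoped Classical

noncomputable section

variable {V : Type*} [Fintype V] [DecidableEq V]

/-- The number of shortest paths between `s` and `t` in `G` (σ_G(s,t)). -/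
def numSP (G : SimpleGraph V) (s t : V) : ℕ :=
  Nat.card {w : G.Walk s t // w.length = G.dist s t}

/-- The number of shortest paths between `s` and `t` in `G` passing through edge `e`
(σ_G(s,t | e)). -/
def numSPthru (G : SimpleGraph V) (s t : V) (e : Sym2 V) : ℕ :=
  Nat.card {w : G.Walk s t // w.length = G.dist s t ∧ e ∈ w.edges}

/-- `N_G(t)`: the vertices of `Vsrc \ {t}` reachable from `t` in `G` at minimum distance
from `t`. -/
def nearestSources (Vsrc : Finset V) (G : SimpleGraph V) (t : V) : Finset V :=
  ((Vsrc.erase t).filter (fun s => G.Reachable t s)).filter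
    (fun s => ∀ s' ∈ (Vsrc.erase t).filter (fun s'' => G.Reachable t s''),
      G.dist t s ≤ G.dist t s')

/-- The load of edge `e` in `G`:
`load_G(e) = Σ_{t ∈ Vld} Σ_{s ∈ N_G(t)} σ_G(s,t|e) / (|N_G(t)|·σ_G(s,t))`. -/
def eload (Vsrc Vld : Finset V) (G : SimpleGraph V) (e : Sym2 V) : ℝ :=
  ∑ t ∈ Vld, ∑ s ∈ nearestSources Vsrc G t,
    (numSPthru G s t e : ℝ) / (((nearestSources Vsrc G t).card : ℝ) * (numSP G s t : ℝ))

/-- The failure operator: removes every edge whose current load exceeds its capacity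
`c_e = (1+α)·load_{G₀}(e)`. -/
def Fop (Vsrc Vld : Finset V) (G0 : SimpleGraph V) (α : ℝ) (G : SimpleGraph V) :
    SimpleGraph V where
  Adj u v := G.Adj u v ∧ eload Vsrc Vld G s(u, v) ≤ (1 + α) * eload Vsrc Vld G0 s(u, v)
  symm := by
    constructor
    intro u v h
    refine ⟨h.1.symm, ?_⟩
    rw [Sym2.eq_swap]
    exact h.2
  loopless := ⟨fun v h => G.loopless.irrefl v h.1⟩

/-- `F*(G)`: the fixed point reached by iterating the failure operator (reached after at
most `|E|+1 ≤ (card V)^2` applications, since each non-trivial application removes an edge). -/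
def Fstar (Vsrc Vld : Finset V) (G0 : SimpleGraph V) (α : ℝ) (G : SimpleGraph V) :
    SimpleGraph V :=
  (Fop Vsrc Vld G0 α)^[Fintype.card V ^ 2] G

/-- `G − S`: the (induced) subgraph obtained by deleting the vertices of `S`. -/
def deleteVerts (G : SimpleGraph V) (S : Finset V) : SimpleGraph V where
  Adj u v := G.Adj u v ∧ u ∉ S ∧ v ∉ S
  symm := ⟨fun u v h => ⟨h.1.symm, h.2.2, h.2.1⟩⟩
  loopless := ⟨fun v h => G.loopless.irrefl v h.1⟩

/-- `disc(G)`: the number of load nodes from which no source (other than itself) is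
reachable in `G`. -/
def disc (Vsrc Vld : Finset V) (G : SimpleGraph V) : ℕ :=
  (Vld.filter (fun t => ∀ s ∈ Vsrc, s ≠ t → ¬ G.Reachable t s)).card

/-- The payoff `p(V_a,V_d) = disc(F*(G₀ − (V_a \ V_d)))`. -/
def payoff (Vsrc Vld : Finset V) (G0 : SimpleGraph V) (α : ℝ) (Va Vd : Finset V) : ℕ :=
  disc Vsrc Vld (Fstar Vsrc Vld G0 α (deleteVerts G0 (Va \ Vd)))

/-- `f` is submodular: adding an element to a larger set yields a smaller increment. -/
def IsSubmodular {β : Type*} [DecidableEq β] (f : Finset β → ℤ) : Prop :=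
  ∀ ⦃S1 S2 : Finset β⦄, S1 ⊆ S2 → ∀ s ∉ S2,
    f (insert s S2) - f S2 ≤ f (insert s S1) - f S1

/-- `f` is supermodular: adding an element to a larger set yields a larger increment. -/
def IsSupermodular {β : Type*} [DecidableEq β] (f : Finset β → ℤ) : Prop :=
  ∀ ⦃S1 S2 : Finset β⦄, S1 ⊆ S2 → ∀ s ∉ S2,
    f (insert s S1) - f S1 ≤ f (insert s S2) - f S2


section AuxLemmas

open SimpleGraph

private lemma walk_len_one {G : SimpleGraph V} {s t : V} :
    ∀ (w : G.Walk s t), w.length = 1 → ∃ h : G.Adj s t, w = Walk.cons h Walk.nil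
  | Walk.nil, hw => by simp at hw
  | Walk.cons h p, hw => by
      have hp : p.length = 0 := by simpa using hw
      have hv := Walk.eq_of_length_eq_zero hp
      subst hv
      have hpn : p = Walk.nil := (Walk.nil_iff_length_eq.mpr hp).eq_nil
      subst hpn
      exact ⟨h, rfl⟩

private lemma numSP_adj {G : SimpleGraph V} {s t : V} (h : G.Adj s t) : numSP G s t = 1 := by
  have hd : G.dist s t = 1 := dist_eq_one_iff_adj.mpr h
  rw [numSP, Nat.card_eq_one_iff_exists]
  refine ⟨⟨Walk.cons h Walk.nil, by simp [hd]⟩, ?_⟩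
  rintro ⟨w, hw⟩
  obtain ⟨h', rfl⟩ := walk_len_one w (by rw [hw, hd])
  rfl

private lemma numSPthru_self {G : SimpleGraph V} {s t : V} (h : G.Adj s t) :
    numSPthru G s t s(s, t) = 1 := by
  have hd : G.dist s t = 1 := dist_eq_one_iff_adj.mpr h
  rw [numSPthru, Nat.card_eq_one_iff_exists]
  refine ⟨⟨Walk.cons h Walk.nil, by simp [hd]⟩, ?_⟩
  rintro ⟨w, hw, _⟩
  obtain ⟨h', rfl⟩ := walk_len_one w (by rw [hw, hd])
  rfl

private lemma numSPthru_ne {G : SimpleGraph V} {s t : V} (h : G.Adj s t) {e : Sym2 V}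
    (he : e ≠ s(s, t)) : numSPthru G s t e = 0 := by
  have hd : G.dist s t = 1 := dist_eq_one_iff_adj.mpr h
  rw [numSPthru]
  have : IsEmpty {w : G.Walk s t // w.length = G.dist s t ∧ e ∈ w.edges} := by
    constructor
    rintro ⟨w, hw, hme⟩
    obtain ⟨h', rfl⟩ := walk_len_one w (by rw [hw, hd])
    simp at hme
    exact he hme
  exact Nat.card_of_isEmpty

private lemma eload_nonneg (Vsrc Vld : Finset V) (G : SimpleGraph V) (e : Sym2 V) :
    0 ≤ eload Vsrc Vld G e := by
  refine Finset.sum_nonneg fun t _ => Finset.sum_nonneg fun s _ => ?_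
  positivity

private lemma Fop_fixed {Vsrc Vld : Finset V} {G0 : SimpleGraph V} {α : ℝ}
    {G : SimpleGraph V}
    (h : ∀ u v, G.Adj u v → eload Vsrc Vld G s(u, v) ≤ (1 + α) * eload Vsrc Vld G0 s(u, v)) :
    Fop Vsrc Vld G0 α G = G := by
  ext u v
  exact ⟨fun hh => hh.1, fun hh => ⟨hh, h u v hh⟩⟩

private lemma Fstar_fixed {Vsrc Vld : Finset V} {G0 : SimpleGraph V} {α : ℝ}
    {G : SimpleGraph V} (h : Fop Vsrc Vld G0 α G = G) : Fstar Vsrc Vld G0 α G = G :=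
  Function.iterate_fixed h _

private lemma no_reach {G : SimpleGraph V} {x y : V} (hxy : x ≠ y)
    (hiso : ∀ v, ¬ G.Adj x v) : ¬ G.Reachable x y := by
  rintro ⟨w⟩
  cases w with
  | nil => exact hxy rfl
  | cons h _ => exact hiso _ h

private lemma pg_adj01 : (pathGraph 3).Adj 0 1 := by rw [pathGraph_adj]; decide
private lemma pg_adj10 : (pathGraph 3).Adj 1 0 := by rw [pathGraph_adj]; decide
private lemma pg_adj12 : (pathGraph 3).Adj 1 2 := by rw [pathGraph_adj]; decide
private lemma pg_adj21 : (pathGraph 3).Adj 2 1 := by rw [pathGraph_adj]; decide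

private lemma NS0 : nearestSources ({0, 2} : Finset (Fin 3)) (pathGraph 3) 1 = {0, 2} := by
  have herase : ({0, 2} : Finset (Fin 3)).erase 1 = {0, 2} := by decide
  have hreach : ({0, 2} : Finset (Fin 3)).filter
      (fun s => (pathGraph 3).Reachable 1 s) = {0, 2} := by
    rw [Finset.filter_eq_self]
    intro x hx
    fin_cases hx
    · exact pg_adj10.reachable
    · exact pg_adj12.reachable
  simp only [nearestSources, herase, hreach]
  rw [Finset.filter_eq_self]
  intro s hs s' hs'
  have h1 : (pathGraph 3).dist 1 s = 1 := by
    fin_cases hs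
    · exact dist_eq_one_iff_adj.mpr pg_adj10
    · exact dist_eq_one_iff_adj.mpr pg_adj12
  have h2 : (pathGraph 3).dist 1 s' = 1 := by
    fin_cases hs'
    · exact dist_eq_one_iff_adj.mpr pg_adj10
    · exact dist_eq_one_iff_adj.mpr pg_adj12
  omega

private lemma G1_adj12 : (deleteVerts (pathGraph 3) ({0} : Finset (Fin 3))).Adj 1 2 :=
  ⟨pg_adj12, by decide, by decide⟩

private lemma G2_adj10 : (deleteVerts (pathGraph 3) ({2} : Finset (Fin 3))).Adj 1 0 :=
  ⟨pg_adj10, by decide, by decide⟩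

private lemma G1_not_reach :
    ¬ (deleteVerts (pathGraph 3) ({0} : Finset (Fin 3))).Reachable 1 0 := by
  intro hr
  refine no_reach (G := deleteVerts (pathGraph 3) ({0} : Finset (Fin 3)))
    (x := 0) (y := 1) (by decide) ?_ hr.symm
  intro v hv
  exact hv.2.1 (Finset.mem_singleton_self 0)

private lemma G2_not_reach :
    ¬ (deleteVerts (pathGraph 3) ({2} : Finset (Fin 3))).Reachable 1 2 := by
  intro hr
  refine no_reach (G := deleteVerts (pathGraph 3) ({2} : Finset (Fin 3)))
    (x := 2) (y := 1) (by decide) ?_ hr.symm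
  intro v hv
  exact hv.2.1 (Finset.mem_singleton_self 2)

private lemma NS1 : nearestSources ({0, 2} : Finset (Fin 3))
    (deleteVerts (pathGraph 3) ({0} : Finset (Fin 3))) 1 = {2} := by
  have herase : ({0, 2} : Finset (Fin 3)).erase 1 = {0, 2} := by decide
  have hreach : ({0, 2} : Finset (Fin 3)).filter
      (fun s => (deleteVerts (pathGraph 3) ({0} : Finset (Fin 3))).Reachable 1 s) = {2} := by
    ext x
    simp only [Finset.mem_filter, Finset.mem_insert, Finset.mem_singleton]
    constructor
    · rintro ⟨hx | hx, hr⟩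
      · subst hx; exact absurd hr G1_not_reach
      · exact hx
    · rintro rfl; exact ⟨Or.inr rfl, G1_adj12.reachable⟩
  simp only [nearestSources, herase, hreach]
  rw [Finset.filter_eq_self]
  intro s hs s' hs'
  simp only [Finset.mem_singleton] at hs hs'
  subst hs; subst hs'
  exact le_refl _

private lemma NS2 : nearestSources ({0, 2} : Finset (Fin 3))
    (deleteVerts (pathGraph 3) ({2} : Finset (Fin 3))) 1 = {0} := by
  have herase : ({0, 2} : Finset (Fin 3)).erase 1 = {0, 2} := by decide
  have hreach : ({0, 2} : Finset (Fin 3)).filter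
      (fun s => (deleteVerts (pathGraph 3) ({2} : Finset (Fin 3))).Reachable 1 s) = {0} := by
    ext x
    simp only [Finset.mem_filter, Finset.mem_insert, Finset.mem_singleton]
    constructor
    · rintro ⟨hx | hx, hr⟩
      · exact hx
      · subst hx; exact absurd hr G2_not_reach
    · rintro rfl; exact ⟨Or.inl rfl, G2_adj10.reachable⟩
  simp only [nearestSources, herase, hreach]
  rw [Finset.filter_eq_self]
  intro s hs s' hs'
  simp only [Finset.mem_singleton] at hs hs'
  subst hs; subst hs'
  exact le_refl _

private lemma eload_G0_12 : eload ({0, 2} : Finset (Fin 3)) ({1} : Finset (Fin 3))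
    (pathGraph 3) s(1, 2) = 1 / 2 := by
  rw [eload, Finset.sum_singleton]
  simp only [NS0]
  rw [Finset.sum_pair (by decide : (0 : Fin 3) ≠ 2)]
  have h1 : numSPthru (pathGraph 3) 0 1 s((1 : Fin 3), 2) = 0 :=
    numSPthru_ne pg_adj01 (by decide)
  have h2 : numSPthru (pathGraph 3) 2 1 s((1 : Fin 3), 2) = 1 := by
    have he : s((1 : Fin 3), 2) = s((2 : Fin 3), 1) := by decide
    rw [he]; exact numSPthru_self pg_adj21
  have hc : ({0, 2} : Finset (Fin 3)).card = 2 := by decide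
  rw [h1, h2, numSP_adj pg_adj01, numSP_adj pg_adj21, hc]
  norm_num

private lemma eload_G0_01 : eload ({0, 2} : Finset (Fin 3)) ({1} : Finset (Fin 3))
    (pathGraph 3) s(0, 1) = 1 / 2 := by
  rw [eload, Finset.sum_singleton]
  simp only [NS0]
  rw [Finset.sum_pair (by decide : (0 : Fin 3) ≠ 2)]
  have h1 : numSPthru (pathGraph 3) 0 1 s((0 : Fin 3), 1) = 1 :=
    numSPthru_self pg_adj01
  have h2 : numSPthru (pathGraph 3) 2 1 s((0 : Fin 3), 1) = 0 :=
    numSPthru_ne pg_adj21 (by decide)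
  have hc : ({0, 2} : Finset (Fin 3)).card = 2 := by decide
  rw [h1, h2, numSP_adj pg_adj01, numSP_adj pg_adj21, hc]
  norm_num

private lemma eload_G1_12 : eload ({0, 2} : Finset (Fin 3)) ({1} : Finset (Fin 3))
    (deleteVerts (pathGraph 3) ({0} : Finset (Fin 3))) s(1, 2) = 1 := by
  rw [eload, Finset.sum_singleton]
  simp only [NS1]
  rw [Finset.sum_singleton]
  have h2 : numSPthru (deleteVerts (pathGraph 3) ({0} : Finset (Fin 3))) 2 1
      s((1 : Fin 3), 2) = 1 := by
    have he : s((1 : Fin 3), 2) = s((2 : Fin 3), 1) := by decide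
    rw [he]; exact numSPthru_self G1_adj12.symm
  rw [h2, numSP_adj G1_adj12.symm]
  norm_num

private lemma eload_G2_01 : eload ({0, 2} : Finset (Fin 3)) ({1} : Finset (Fin 3))
    (deleteVerts (pathGraph 3) ({2} : Finset (Fin 3))) s(0, 1) = 1 := by
  rw [eload, Finset.sum_singleton]
  simp only [NS2]
  rw [Finset.sum_singleton]
  have h2 : numSPthru (deleteVerts (pathGraph 3) ({2} : Finset (Fin 3))) 0 1
      s((0 : Fin 3), 1) = 1 := numSPthru_self G2_adj10.symm
  rw [h2, numSP_adj G2_adj10.symm]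
  norm_num

private lemma G1_adj_edge {u v : Fin 3}
    (h : (deleteVerts (pathGraph 3) ({0} : Finset (Fin 3))).Adj u v) :
    s(u, v) = s((1 : Fin 3), 2) := by
  obtain ⟨ha, hu, hv⟩ := h
  rw [pathGraph_adj] at ha
  revert ha hu hv
  fin_cases u <;> fin_cases v <;> decide

private lemma G2_adj_edge {u v : Fin 3}
    (h : (deleteVerts (pathGraph 3) ({2} : Finset (Fin 3))).Adj u v) :
    s(u, v) = s((0 : Fin 3), 1) := by
  obtain ⟨ha, hu, hv⟩ := h
  rw [pathGraph_adj] at ha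
  revert ha hu hv
  fin_cases u <;> fin_cases v <;> decide

private lemma card_filter_singleton_pos {α : Type*} [DecidableEq α] (a : α) (p : α → Prop)
    (inst : DecidablePred p) (h : p a) :
    (@Finset.filter α p inst ({a} : Finset α)).card = 1 := by
  rw [Subsingleton.elim inst (Classical.decPred p)]
  rw [@Finset.filter_singleton α p (Classical.decPred p) a, if_pos h, Finset.card_singleton]

private lemma card_filter_singleton_neg {α : Type*} [DecidableEq α] (a : α) (p : α → Prop)
    (inst : DecidablePred p) (h : ¬ p a) :
    (@Finset.filter α p inst ({a} : Finset α)).card = 0 := by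
  rw [Subsingleton.elim inst (Classical.decPred p)]
  rw [@Finset.filter_singleton α p (Classical.decPred p) a, if_neg h, Finset.card_empty]

private lemma disc_zero {G : SimpleGraph (Fin 3)}
    (h : ∃ s ∈ ({0, 2} : Finset (Fin 3)), s ≠ 1 ∧ G.Reachable 1 s) :
    disc ({0, 2} : Finset (Fin 3)) ({1} : Finset (Fin 3)) G = 0 := by
  rw [disc]
  refine card_filter_singleton_neg _ _ _ ?_
  intro hall
  obtain ⟨s, hs, hne, hr⟩ := h
  exact hall s hs hne hr

private lemma disc_bot :
    disc ({0, 2} : Finset (Fin 3)) ({1} : Finset (Fin 3)) (⊥ : SimpleGraph (Fin 3)) = 1 := by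
  rw [disc]
  refine card_filter_singleton_pos _ _ _ ?_
  intro s _ hne hr
  rw [reachable_bot] at hr
  exact hne hr.symm

end AuxLemmas

/-- In the path `a — b — c` (vertices `0,1,2` of `Fin 3`) with `V_src = {a,c}`,
`V_ld = {b}` and `α = 1`, with defense `V_d = {b}` one has `p(∅,{b}) = 0`,
`p({a},{b}) = 0`, `p({c},{b}) = 0` and `p({a,c},{b}) = 1`; hence
`p({a,c},{b}) − p({a},{b}) > p({c},{b}) − p(∅,{b})`, so
`V_a ↦ p(V_a,{b})` is not submodular. -/
theorem path_example_not_submodular_in_attack :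
    payoff ({0, 2} : Finset (Fin 3)) ({1} : Finset (Fin 3)) (SimpleGraph.pathGraph 3) 1 ∅ {1} = 0 ∧
    payoff ({0, 2} : Finset (Fin 3)) ({1} : Finset (Fin 3)) (SimpleGraph.pathGraph 3) 1 {0} {1} = 0 ∧
    payoff ({0, 2} : Finset (Fin 3)) ({1} : Finset (Fin 3)) (SimpleGraph.pathGraph 3) 1 {2} {1} = 0 ∧
    payoff ({0, 2} : Finset (Fin 3)) ({1} : Finset (Fin 3)) (SimpleGraph.pathGraph 3) 1 {0, 2} {1} = 1 ∧
    ((payoff ({0, 2} : Finset (Fin 3)) ({1} : Finset (Fin 3)) (SimpleGraph.pathGraph 3) 1 {2} {1} : ℤ) - (payoff ({0, 2} : Finset (Fin 3)) ({1} : Finset (Fin 3)) (SimpleGraph.pathGraph 3) 1 ∅ {1} : ℤ) <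
      (payoff ({0, 2} : Finset (Fin 3)) ({1} : Finset (Fin 3)) (SimpleGraph.pathGraph 3) 1 {0, 2} {1} : ℤ) - (payoff ({0, 2} : Finset (Fin 3)) ({1} : Finset (Fin 3)) (SimpleGraph.pathGraph 3) 1 {0} {1} : ℤ)) ∧
    ¬ IsSubmodular (fun Va : Finset (Fin 3) => (payoff ({0, 2} : Finset (Fin 3)) ({1} : Finset (Fin 3)) (SimpleGraph.pathGraph 3) 1 Va {1} : ℤ)) := by
  have hdel0 : deleteVerts (SimpleGraph.pathGraph 3) (∅ : Finset (Fin 3)) =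
      SimpleGraph.pathGraph 3 := by
    ext u v
    exact ⟨fun h => h.1, fun h => ⟨h, by simp, by simp⟩⟩
  have hbot : deleteVerts (SimpleGraph.pathGraph 3) ({0, 2} : Finset (Fin 3)) = ⊥ := by
    ext u v
    simp only [SimpleGraph.bot_adj, iff_false]
    rintro ⟨ha, hu, hv⟩
    rw [SimpleGraph.pathGraph_adj] at ha
    revert ha hu hv
    fin_cases u <;> fin_cases v <;> decide
  have hF0 : Fop ({0, 2} : Finset (Fin 3)) ({1} : Finset (Fin 3)) (SimpleGraph.pathGraph 3) 1
      (SimpleGraph.pathGraph 3) = SimpleGraph.pathGraph 3 :=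
    Fop_fixed (fun u v _ => by
      have := eload_nonneg ({0, 2} : Finset (Fin 3)) ({1} : Finset (Fin 3))
        (SimpleGraph.pathGraph 3) s(u, v)
      linarith)
  have hF1 : Fop ({0, 2} : Finset (Fin 3)) ({1} : Finset (Fin 3)) (SimpleGraph.pathGraph 3) 1
      (deleteVerts (SimpleGraph.pathGraph 3) ({0} : Finset (Fin 3))) =
      deleteVerts (SimpleGraph.pathGraph 3) ({0} : Finset (Fin 3)) :=
    Fop_fixed (fun u v h => by rw [G1_adj_edge h, eload_G1_12, eload_G0_12]; norm_num)
  have hF2 : Fop ({0, 2} : Finset (Fin 3)) ({1} : Finset (Fin 3)) (SimpleGraph.pathGraph 3) 1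
      (deleteVerts (SimpleGraph.pathGraph 3) ({2} : Finset (Fin 3))) =
      deleteVerts (SimpleGraph.pathGraph 3) ({2} : Finset (Fin 3)) :=
    Fop_fixed (fun u v h => by rw [G2_adj_edge h, eload_G2_01, eload_G0_01]; norm_num)
  have hFbot : Fop ({0, 2} : Finset (Fin 3)) ({1} : Finset (Fin 3)) (SimpleGraph.pathGraph 3) 1
      (⊥ : SimpleGraph (Fin 3)) = ⊥ :=
    Fop_fixed (fun u v h => absurd h (by simp))
  have p0 : payoff ({0, 2} : Finset (Fin 3)) ({1} : Finset (Fin 3)) (SimpleGraph.pathGraph 3) 1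
      ∅ {1} = 0 := by
    rw [payoff, show (∅ : Finset (Fin 3)) \ {1} = ∅ from by decide, hdel0, Fstar_fixed hF0]
    exact disc_zero ⟨0, by decide, by decide, pg_adj10.reachable⟩
  have pA : payoff ({0, 2} : Finset (Fin 3)) ({1} : Finset (Fin 3)) (SimpleGraph.pathGraph 3) 1
      {0} {1} = 0 := by
    rw [payoff, show ({0} : Finset (Fin 3)) \ {1} = {0} from by decide, Fstar_fixed hF1]
    exact disc_zero ⟨2, by decide, by decide, G1_adj12.reachable⟩
  have pC : payoff ({0, 2} : Finset (Fin 3)) ({1} : Finset (Fin 3)) (SimpleGraph.pathGraph 3) 1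
      {2} {1} = 0 := by
    rw [payoff, show ({2} : Finset (Fin 3)) \ {1} = {2} from by decide, Fstar_fixed hF2]
    exact disc_zero ⟨0, by decide, by decide, G2_adj10.reachable⟩
  have pAC : payoff ({0, 2} : Finset (Fin 3)) ({1} : Finset (Fin 3)) (SimpleGraph.pathGraph 3) 1
      {0, 2} {1} = 1 := by
    rw [payoff, show ({0, 2} : Finset (Fin 3)) \ {1} = {0, 2} from by decide, hbot,
      Fstar_fixed hFbot]
    exact disc_bot
  refine ⟨p0, pA, pC, pAC, ?_, ?_⟩
  · rw [pC, p0, pAC, pA]; norm_num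
  · intro h
    have h2 := h (S1 := ∅) (S2 := {0}) (Finset.empty_subset _) 2 (by decide)
    simp only at h2
    rw [show insert (2 : Fin 3) ({0} : Finset (Fin 3)) = {0, 2} from by decide,
      show insert (2 : Fin 3) (∅ : Finset (Fin 3)) = {2} from by decide] at h2
    rw [p0, pA, pC, pAC] at h2
    norm_num at h2

end
end

section
/- In the cascading-failure model, suppose G₀ is bipartite with the two sides of the bipartition exactly V_src and V_ld (every edge joins a source to a load, and V_src, V_ld partition the vertex set). Then for every graph G obtained from G₀ by deleting vertices and/or edges and every edge {h,s} of G with h ∈ V_src and s ∈ V_ld, load_G({h,s}) = 1/deg_G(s), where deg_G(s) is the degree of the load endpoint s in G. -/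
open scoped Classical

noncomputable section

variable {V : Type*} [Fintype V] [DecidableEq V]

/-- A walk of length one is the single-edge walk. -/
lemma walk_length_one_eq {G : SimpleGraph V} {a b : V} (hab : G.Adj a b) :
    ∀ w : G.Walk a b, w.length = 1 → w = SimpleGraph.Walk.cons hab SimpleGraph.Walk.nil := by
  intro w hw
  cases w with
  | nil => simp at hw
  | cons h p =>
    have hp : p.length = 0 := by simpa using hw
    have hcb := SimpleGraph.Walk.eq_of_length_eq_zero hp
    subst hcb
    have hnil : p = SimpleGraph.Walk.nil := by
      cases p with
      | nil => rfl
      | cons _ _ => simp at hp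
    subst hnil
    rfl

lemma numSP_eq_one {G : SimpleGraph V} {a b : V} (hab : G.Adj a b) : numSP G a b = 1 := by
  have hd : G.dist a b = 1 := SimpleGraph.dist_eq_one_iff_adj.mpr hab
  rw [numSP, hd, Nat.card_eq_one_iff_unique]
  refine ⟨⟨fun w1 w2 => Subtype.ext ?_⟩,
    ⟨⟨SimpleGraph.Walk.cons hab SimpleGraph.Walk.nil, by simp⟩⟩⟩
  exact (walk_length_one_eq hab w1.1 w1.2).trans (walk_length_one_eq hab w2.1 w2.2).symm

lemma numSPthru_eq {G : SimpleGraph V} {a b : V} (hab : G.Adj a b) (e : Sym2 V) :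
    numSPthru G a b e = if e = s(a, b) then 1 else 0 := by
  have hd : G.dist a b = 1 := SimpleGraph.dist_eq_one_iff_adj.mpr hab
  rw [numSPthru, hd]
  split_ifs with he
  · rw [Nat.card_eq_one_iff_unique]
    refine ⟨⟨fun w1 w2 => Subtype.ext ?_⟩,
      ⟨⟨SimpleGraph.Walk.cons hab SimpleGraph.Walk.nil, by simp [he]⟩⟩⟩
    exact (walk_length_one_eq hab w1.1 w1.2.1).trans (walk_length_one_eq hab w2.1 w2.2.1).symm
  · have : IsEmpty {w : G.Walk a b // w.length = 1 ∧ e ∈ w.edges} := by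
      constructor
      rintro ⟨w, h1, h2⟩
      rw [walk_length_one_eq hab w h1] at h2
      simp at h2
      exact he h2
    exact Nat.card_of_isEmpty

lemma exists_nbr_of_reachable {G : SimpleGraph V} {t s' : V}
    (hr : G.Reachable t s') (hne : s' ≠ t) : ∃ u, G.Adj t u := by
  obtain ⟨w⟩ := hr
  cases w with
  | nil => exact absurd rfl hne
  | cons h _ => exact ⟨_, h⟩

/-- In a bipartite graph, the nearest sources of a load node are exactly its neighbors. -/
lemma nearest_eq_neighbors {Vsrc : Finset V} {G : SimpleGraph V} {t : V}
    (htsrc : t ∉ Vsrc) (hnbr : ∀ u, G.Adj t u → u ∈ Vsrc) :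
    nearestSources Vsrc G t = G.neighborFinset t := by
  ext u
  simp only [nearestSources, Finset.mem_filter, Finset.mem_erase,
    SimpleGraph.mem_neighborFinset]
  constructor
  · rintro ⟨⟨⟨hne, hu⟩, hr⟩, hmin⟩
    obtain ⟨v, hv⟩ := exists_nbr_of_reachable hr hne
    have hdv : G.dist t v = 1 := SimpleGraph.dist_eq_one_iff_adj.mpr hv
    have h1 : G.dist t u ≤ 1 := by
      have := hmin v ⟨⟨hv.ne', hnbr v hv⟩, hv.reachable⟩
      omega
    have h0 : G.dist t u ≠ 0 := fun h' => hne (hr.dist_eq_zero_iff.mp h').symm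
    have : G.dist t u = 1 := by omega
    exact SimpleGraph.dist_eq_one_iff_adj.mp this
  · intro hadj
    refine ⟨⟨⟨hadj.ne', hnbr u hadj⟩, hadj.reachable⟩, ?_⟩
    intro s'' hs''
    have hdu : G.dist t u = 1 := SimpleGraph.dist_eq_one_iff_adj.mpr hadj
    have h0 : G.dist t s'' ≠ 0 := fun h' =>
      hs''.1.1 (hs''.2.dist_eq_zero_iff.mp h').symm
    omega

/-- When `G₀` is bipartite with sides exactly `V_src` and `V_ld`, the load of any edge
`{h,s}` (with `h ∈ V_src`, `s ∈ V_ld`) of any subgraph `G` of `G₀` is `1/deg_G(s)`, where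
`s` is the load endpoint. -/
theorem eload_eq_inv_degree_of_bipartite {V : Type*} [Fintype V] [DecidableEq V]
    (G0 : SimpleGraph V) (Vsrc Vld : Finset V)
    (hunion : Vsrc ∪ Vld = Finset.univ) (hdisj : Vsrc ∩ Vld = ∅)
    (hedge : ∀ u v : V, G0.Adj u v →
      (u ∈ Vsrc ∧ v ∈ Vld) ∨ (u ∈ Vld ∧ v ∈ Vsrc)) :
    ∀ G : SimpleGraph V, G ≤ G0 → ∀ h s : V, h ∈ Vsrc → s ∈ Vld → G.Adj h s →
      eload Vsrc Vld G s(h, s) = 1 / (G.degree s : ℝ) := by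
  intro G hle h s hh hs hadj
  have hnotsrc : ∀ x ∈ Vld, x ∉ Vsrc := fun x hx hx' =>
    Finset.eq_empty_iff_forall_notMem.mp hdisj x (Finset.mem_inter.mpr ⟨hx', hx⟩)
  have hnbr : ∀ t ∈ Vld, ∀ u, G.Adj t u → u ∈ Vsrc := by
    intro t ht u hu
    rcases hedge t u (hle hu) with ⟨h1, _⟩ | ⟨_, h2⟩
    · exact absurd h1 (hnotsrc t ht)
    · exact h2
  have hnear : ∀ t ∈ Vld, nearestSources Vsrc G t = G.neighborFinset t := fun t ht =>
    nearest_eq_neighbors (hnotsrc t ht) (hnbr t ht)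
  have hsh : h ∈ G.neighborFinset s := by
    rw [SimpleGraph.mem_neighborFinset]; exact hadj.symm
  rw [eload, Finset.sum_eq_single_of_mem s hs]
  · rw [hnear s hs]
    rw [Finset.sum_eq_single_of_mem h hsh]
    · rw [numSPthru_eq hadj, numSP_eq_one hadj, if_pos rfl,
        SimpleGraph.card_neighborFinset_eq_degree]
      simp
    · intro s' hs' hne
      have hadj' : G.Adj s' s := (SimpleGraph.mem_neighborFinset _ _ _).mp hs' |>.symm
      rw [numSPthru_eq hadj', if_neg]
      · simp
      · intro heq
        rw [Sym2.eq_iff] at heq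
        rcases heq with ⟨h1, _⟩ | ⟨h1, _⟩
        · exact hne h1.symm
        · exact hnotsrc s hs (h1 ▸ hh)
  · intro t ht hne
    rw [hnear t ht]
    apply Finset.sum_eq_zero
    intro s' hs'
    have hadj' : G.Adj s' t := (SimpleGraph.mem_neighborFinset _ _ _).mp hs' |>.symm
    rw [numSPthru_eq hadj', if_neg]
    · simp
    · intro heq
      rw [Sym2.eq_iff] at heq
      rcases heq with ⟨_, h2⟩ | ⟨h1, _⟩
      · exact hne h2.symm
      · exact hnotsrc t ht (h1 ▸ hh)

end
end
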